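/- arXiv:1807.01240 — 6 statements merged into one kernel-verified Lean document; each statement's English description precedes it below -/
import Mathlib

section
/- Let P and Q be cache algorithms over a block set B with |B| > n_P + n_Q, and let t, t' ∈ B^l be Q-equivalent traces (i.e., Q(t) = Q(t')) with P(t) ≤ P(t'). Then for every k with P(t) ≤ k ≤ P(t') there exists a trace t* ∈ B^l that is Q-equivalent to t and t' and satisfies P(t*) = k. -/
structure CacheAlg (B : Type) where
  S : Type
  init : S
  n : ℕ
  tr : S → Fin n → S
  evict : S → B → S × Fin n

variable {B : Type} [DecidableEq B]

abbrev CacheAlg.Config (P : CacheAlg B) := P.S × (Fin P.n → Option B)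

noncomputable def CacheAlg.upd (P : CacheAlg B) (g : P.Config) (b : B) : P.Config :=
  if h : ∃ j, g.2 j = some b then (P.tr g.1 h.choose, g.2)
  else ((P.evict g.1 b).1, Function.update g.2 (P.evict g.1 b).2 (some b))

noncomputable def CacheAlg.updTrace (P : CacheAlg B) (g : P.Config) : List B → P.Config
  | [] => g
  | b :: t => P.updTrace (P.upd g b) t

noncomputable def CacheAlg.missesFrom (P : CacheAlg B) (g : P.Config) : List B → ℕ
  | [] => 0
  | b :: t => (if ∃ j, g.2 j = some b then 0 else 1) + P.missesFrom (P.upd g b) t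

def CacheAlg.initConfig (P : CacheAlg B) : P.Config := (P.init, fun _ => none)

/-- Number of misses of `P` on trace `t` from the empty initial configuration. -/
noncomputable def CacheAlg.misses (P : CacheAlg B) (t : List B) : ℕ := P.missesFrom P.initConfig t

/-- The leak ratio `r_{P,Q}(l)`: supremum over sets `T` of traces of length `l`
of `|P(T)| / |Q(T)|`. -/
noncomputable def leakRatio (P Q : CacheAlg B) (l : ℕ) : ℝ :=
  sSup {r : ℝ | ∃ T : Finset (List B), T.Nonempty ∧ (∀ t ∈ T, t.length = l) ∧
    r = ((T.image P.misses).card : ℝ) / ((T.image Q.misses).card : ℝ)}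

/-- Lifting of a bijection on blocks to cache contents, mapping `⊥` to `⊥`. -/
def renameContent (π : B ≃ B) {n : ℕ} (c : Fin n → Option B) : Fin n → Option B :=
  fun j => (c j).map π

/-- Lifting of a bijection on blocks to cache configurations. -/
def CacheAlg.renameConfig (P : CacheAlg B) (π : B ≃ B) (g : P.Config) : P.Config :=
  (g.1, renameContent π g.2)

/-- The eviction function is independent of the accessed block. -/
def CacheAlg.EvictBlockIndep (P : CacheAlg B) : Prop :=
  ∀ (s : P.S) (b b' : B), P.evict s b = P.evict s b'

/-- Congruence of pairs of cache configurations via a simultaneous renaming. -/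
def CacheCongruent (P Q : CacheAlg B) (x y : P.Config × Q.Config) : Prop :=
  ∃ π : B ≃ B, P.renameConfig π x.1 = y.1 ∧ Q.renameConfig π x.2 = y.2

namespace CacheAlg

lemma updTrace_append (P : CacheAlg B) (g : P.Config) (t1 t2 : List B) :
    P.updTrace g (t1 ++ t2) = P.updTrace (P.updTrace g t1) t2 := by
  induction t1 generalizing g with
  | nil => simp [updTrace]
  | cons b t ih => simp [updTrace, ih]

lemma missesFrom_append (P : CacheAlg B) (g : P.Config) (t1 t2 : List B) :
    P.missesFrom g (t1 ++ t2) = P.missesFrom g t1 + P.missesFrom (P.updTrace g t1) t2 := by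
  induction t1 generalizing g with
  | nil => simp [missesFrom, updTrace]
  | cons b t ih => simp [missesFrom, updTrace, ih]; ring

lemma missesFrom_le_length (P : CacheAlg B) (g : P.Config) (t : List B) :
    P.missesFrom g t ≤ t.length := by
  induction t generalizing g with
  | nil => simp [missesFrom]
  | cons b t ih =>
    simp only [missesFrom, List.length_cons]
    have := ih (P.upd g b)
    split <;> omega

lemma missesFrom_of_n_zero (P : CacheAlg B) (h : P.n = 0) (g : P.Config) (t : List B) :
    P.missesFrom g t = t.length := by
  induction t generalizing g with
  | nil => simp [missesFrom]
  | cons b t ih =>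
    simp only [missesFrom, List.length_cons]
    rw [if_neg, ih]
    · omega
    · rintro ⟨j, -⟩; have := j.2; omega

lemma n_pos_of_miss_lt (P : CacheAlg B) (g : P.Config) (t : List B)
    (h : P.missesFrom g t < t.length) : 0 < P.n := by
  by_contra hn
  rw [P.missesFrom_of_n_zero (by omega)] at h
  omega

lemma exists_upd_self (P : CacheAlg B) (h : 0 < P.n) (g : P.Config) (b : B) :
    ∃ j, (P.upd g b).2 j = some b := by
  unfold upd
  split
  · next hj => exact hj
  · exact ⟨(P.evict g.1 b).2, by simp⟩

lemma misses_pos (Q : CacheAlg B) (w : List B) (h : 0 < w.length) : 0 < Q.misses w := by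
  obtain ⟨b, w, rfl⟩ := List.exists_cons_of_ne_nil (List.ne_nil_of_length_pos h)
  simp only [misses, missesFrom]
  rw [if_neg (by rintro ⟨j, hj⟩; simp [initConfig] at hj)]
  omega

end CacheAlg

lemma exists_fresh (P Q : CacheAlg B) (hB : (P.n + Q.n : Cardinal) < Cardinal.mk B)
    (gP : P.Config) (gQ : Q.Config) :
    ∃ b : B, (¬∃ j, gP.2 j = some b) ∧ (¬∃ j, gQ.2 j = some b) := by
  by_contra h
  have h' : ∀ b : B, (∃ j, gP.2 j = some b) ∨ (∃ j, gQ.2 j = some b) := by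
    intro b; by_contra hb; push_neg at hb
    exact h ⟨b, fun ⟨j,hj⟩ => hb.1 j hj, fun ⟨j,hj⟩ => hb.2 j hj⟩
  classical
  set f : B → Fin P.n ⊕ Fin Q.n := fun b =>
    if hp : ∃ j, gP.2 j = some b then Sum.inl hp.choose
    else Sum.inr ((h' b).resolve_left hp).choose with hf
  have hinj : Function.Injective f := by
    intro b b' hbb
    simp only [hf] at hbb
    by_cases hp : ∃ j, gP.2 j = some b <;> by_cases hp' : ∃ j, gP.2 j = some b' <;>
      simp only [hp, hp', dif_pos, dif_neg, not_false_iff] at hbb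
    · have h1 := hp.choose_spec
      have h2 := hp'.choose_spec
      rw [Sum.inl.injEq] at hbb
      rw [hbb] at h1; rw [h1] at h2
      exact Option.some_injective _ h2
    · exact absurd hbb (by simp)
    · exact absurd hbb (by simp)
    · have h1 := ((h' b).resolve_left hp).choose_spec
      have h2 := ((h' b').resolve_left hp').choose_spec
      rw [Sum.inr.injEq] at hbb
      rw [hbb] at h1; rw [h1] at h2
      exact Option.some_injective _ h2
  have := Cardinal.mk_le_of_injective hinj
  simp [Cardinal.mk_sum] at this
  exact absurd (lt_of_lt_of_le hB this) (lt_irrefl _)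

noncomputable def mkSuffix (P Q : CacheAlg B) (hB : (P.n + Q.n : Cardinal) < Cardinal.mk B) :
    ℕ → ℕ → P.Config → Q.Config → B → List B
  | 0, _, _, _, _ => []
  | s+1, 0, gP, gQ, last => last :: mkSuffix P Q hB s 0 (P.upd gP last) (Q.upd gQ last) last
  | s+1, m+1, gP, gQ, _ =>
      (exists_fresh P Q hB gP gQ).choose ::
        mkSuffix P Q hB s m (P.upd gP (exists_fresh P Q hB gP gQ).choose)
          (Q.upd gQ (exists_fresh P Q hB gP gQ).choose) (exists_fresh P Q hB gP gQ).choose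

lemma mkSuffix_length (P Q : CacheAlg B) (hB : (P.n + Q.n : Cardinal) < Cardinal.mk B) :
    ∀ (s m : ℕ) (gP : P.Config) (gQ : Q.Config) (last : B),
      (mkSuffix P Q hB s m gP gQ last).length = s := by
  intro s
  induction s with
  | zero => intro m gP gQ last; rfl
  | succ s ih =>
    intro m gP gQ last
    match m with
    | 0 => simp [mkSuffix, ih]
    | m+1 => simp [mkSuffix, ih]

lemma mkSuffix_misses (P Q : CacheAlg B) (hB : (P.n + Q.n : Cardinal) < Cardinal.mk B)
    (hPn : 0 < P.n) :
    ∀ (s m : ℕ) (gP : P.Config) (gQ : Q.Config) (last : B),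
      m ≤ s → (m < s → 0 < Q.n) →
      (m = 0 → 0 < s → (∃ j, gP.2 j = some last) ∧ (∃ j, gQ.2 j = some last)) →
      P.missesFrom gP (mkSuffix P Q hB s m gP gQ last) = m ∧
      Q.missesFrom gQ (mkSuffix P Q hB s m gP gQ last) = m := by
  intro s
  induction s with
  | zero =>
    intro m gP gQ last hms _ _
    interval_cases m
    exact ⟨rfl, rfl⟩
  | succ s ih =>
    intro m gP gQ last hms hQn hlast
    match m with
    | 0 =>
      obtain ⟨hP, hQ⟩ := hlast rfl (by omega)
      have hQn' : 0 < Q.n := by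
        obtain ⟨j, -⟩ := hQ; exact j.pos
      have hP' : ∃ j, (P.upd gP last).2 j = some last := by
        unfold CacheAlg.upd; rw [dif_pos hP]; exact hP
      have hQ' : ∃ j, (Q.upd gQ last).2 j = some last := by
        unfold CacheAlg.upd; rw [dif_pos hQ]; exact hQ
      have := ih 0 (P.upd gP last) (Q.upd gQ last) last (by omega)
        (fun _ => hQn') (fun _ _ => ⟨hP', hQ'⟩)
      simp only [mkSuffix, CacheAlg.missesFrom]
      rw [if_pos hP, if_pos hQ, this.1, this.2]
      exact ⟨rfl, rfl⟩
    | m+1 =>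
      set b := (exists_fresh P Q hB gP gQ).choose with hb
      obtain ⟨hbP, hbQ⟩ := (exists_fresh P Q hB gP gQ).choose_spec
      have hQn' : m < s → 0 < Q.n := fun h => hQn (by omega)
      have hlast' : m = 0 → 0 < s → (∃ j, (P.upd gP b).2 j = some b) ∧
          (∃ j, (Q.upd gQ b).2 j = some b) := by
        intro hm hs
        exact ⟨P.exists_upd_self hPn gP b, Q.exists_upd_self (hQn (by omega)) gQ b⟩
      have := ih m (P.upd gP b) (Q.upd gQ b) b (by omega) hQn' hlast'
      simp only [mkSuffix, CacheAlg.missesFrom]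
      rw [if_neg hbP, if_neg hbQ, ← hb, this.1, this.2]
      omega

noncomputable def hybrid (P Q : CacheAlg B) (hB : (P.n + Q.n : Cardinal) < Cardinal.mk B)
    (b0 : B) (w : List B) (i : ℕ) : List B :=
  w.take i ++ mkSuffix P Q hB (w.length - i) (Q.misses w - Q.misses (w.take i))
    (P.updTrace P.initConfig (w.take i)) (Q.updTrace Q.initConfig (w.take i)) (w.getD (i-1) b0)

lemma misses_take_split (Q : CacheAlg B) (w : List B) (i : ℕ) :
    Q.misses w = Q.misses (w.take i) +
      Q.missesFrom (Q.updTrace Q.initConfig (w.take i)) (w.drop i) := by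
  conv_lhs => rw [CacheAlg.misses, ← List.take_append_drop i w]
  rw [Q.missesFrom_append]
  rfl

lemma hybrid_spec (P Q : CacheAlg B) (hB : (P.n + Q.n : Cardinal) < Cardinal.mk B)
    (hPn : 0 < P.n) (b0 : B) (w : List B) (i : ℕ) :
    (hybrid P Q hB b0 w i).length = w.length ∧
    Q.misses (hybrid P Q hB b0 w i) = Q.misses w ∧
    P.misses (hybrid P Q hB b0 w i) =
      P.misses (w.take i) + (Q.misses w - Q.misses (w.take i)) := by
  set l := w.length with hl
  set q := Q.misses w with hq
  set qi := Q.misses (w.take i) with hqi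
  set gP := P.updTrace P.initConfig (w.take i) with hgP
  set gQ := Q.updTrace Q.initConfig (w.take i) with hgQ
  have hsplit := misses_take_split Q w i
  rw [← hq, ← hqi, ← hgQ] at hsplit
  have hrest : Q.missesFrom gQ (w.drop i) ≤ l - i := by
    have := Q.missesFrom_le_length gQ (w.drop i)
    rwa [List.length_drop] at this
  have hm : q - qi = Q.missesFrom gQ (w.drop i) := by omega
  have hms : q - qi ≤ l - i := by omega
  have hQn : q - qi < l - i → 0 < Q.n := by
    intro h
    refine Q.n_pos_of_miss_lt gQ (w.drop i) ?_
    rw [List.length_drop]; omega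
  have hlast : q - qi = 0 → 0 < l - i →
      (∃ j, gP.2 j = some (w.getD (i-1) b0)) ∧ (∃ j, gQ.2 j = some (w.getD (i-1) b0)) := by
    intro hm0 hs
    have hil : i < l := by omega
    match i with
    | 0 =>
      have hq0 : 0 < q := Q.misses_pos w (by omega)
      have hqi0 : qi = 0 := by rw [hqi]; rfl
      omega
    | i'+1 =>
      have hi' : i' < w.length := by omega
      have htk : w.take (i'+1) = w.take i' ++ [w[i']] := by
        rw [List.take_succ, List.getElem?_eq_getElem hi']; rfl
      have hgd : w.getD (i'+1-1) b0 = w[i'] := List.getD_eq_getElem w b0 hi'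
      have hQn' : 0 < Q.n := hQn (by omega)
      constructor
      · rw [hgP, htk, P.updTrace_append, hgd]
        exact P.exists_upd_self hPn _ _
      · rw [hgQ, htk, Q.updTrace_append, hgd]
        exact Q.exists_upd_self hQn' _ _
  obtain ⟨hmP, hmQ⟩ := mkSuffix_misses P Q hB hPn (l - i) (q - qi) gP gQ
    (w.getD (i-1) b0) hms hQn hlast
  refine ⟨?_, ?_, ?_⟩
  · rw [hybrid, List.length_append, mkSuffix_length, List.length_take]
    omega
  · rw [hybrid, CacheAlg.misses, Q.missesFrom_append, ← hgQ, hmQ]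
    rw [← CacheAlg.misses, ← hqi]
    omega
  · rw [hybrid, CacheAlg.misses, P.missesFrom_append, ← hgP, hmP]
    rfl

lemma misses_take_le (Q : CacheAlg B) (w : List B) (i : ℕ) :
    Q.misses (w.take i) ≤ Q.misses w := by
  have := misses_take_split Q w i; omega

lemma take_misses_step (P : CacheAlg B) (w : List B) (i : ℕ) :
    P.misses (w.take i) ≤ P.misses (w.take (i+1)) ∧
    P.misses (w.take (i+1)) ≤ P.misses (w.take i) + 1 := by
  have h : P.misses (w.take (i+1)) = P.misses (w.take i) +
      P.missesFrom (P.updTrace P.initConfig (w.take i)) (w[i]?.toList) := by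
    rw [List.take_succ, CacheAlg.misses, P.missesFrom_append]; rfl
  have h1 := P.missesFrom_le_length (P.updTrace P.initConfig (w.take i)) (w[i]?.toList)
  have h2 : (w[i]?.toList).length ≤ 1 := by cases w[i]? <;> simp
  omega

lemma nat_ivt (g : ℕ → ℕ) (hstep : ∀ i, g (i+1) ≤ g i + 1) (n k : ℕ)
    (h1 : g 0 ≤ k) (h2 : k ≤ g n) : ∃ i, g i = k := by
  induction n with
  | zero => exact ⟨0, by omega⟩
  | succ n ih =>
    by_cases h : k ≤ g n
    · exact ih h
    · have := hstep n
      exact ⟨n+1, by omega⟩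

lemma nat_ivt' (g : ℕ → ℕ) (hstep : ∀ i, g i ≤ g (i+1) + 1) (n k : ℕ)
    (h1 : g n ≤ k) (h2 : k ≤ g 0) : ∃ i, g i = k := by
  induction n with
  | zero => exact ⟨0, by omega⟩
  | succ n ih =>
    by_cases h : g (n+1) = k
    · exact ⟨n+1, h⟩
    · have := hstep n
      exact ih (by omega)


theorem exists_intermediate_trace (P Q : CacheAlg B)
    (hB : (P.n + Q.n : Cardinal) < Cardinal.mk B)
    (l : ℕ) (t t' : List B) (ht : t.length = l) (ht' : t'.length = l)
    (hQeq : Q.misses t = Q.misses t') (hle : P.misses t ≤ P.misses t')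
    (k : ℕ) (hk1 : P.misses t ≤ k) (hk2 : k ≤ P.misses t') :
    ∃ tstar : List B, tstar.length = l ∧
      Q.misses tstar = Q.misses t ∧ P.misses tstar = k := by
  classical
  have hBne : Nonempty B := by
    by_contra h
    rw [not_nonempty_iff] at h
    have h0 : Cardinal.mk B = 0 := Cardinal.mk_eq_zero B
    rw [h0] at hB
    exact absurd hB (by simp)
  obtain ⟨b0⟩ := hBne
  by_cases hPn : P.n = 0
  · refine ⟨t, ht, rfl, ?_⟩
    have h1 : P.misses t = l := by
      rw [CacheAlg.misses, P.missesFrom_of_n_zero hPn, ht]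
    have h2 : P.misses t' = l := by
      rw [CacheAlg.misses, P.missesFrom_of_n_zero hPn, ht']
    omega
  · have hPn' : 0 < P.n := Nat.pos_of_ne_zero hPn
    by_cases hkq : k ≤ Q.misses t
    · set g : ℕ → ℕ :=
        fun i => P.misses (t.take i) + (Q.misses t - Q.misses (t.take i)) with hg
      have hstep : ∀ i, g i ≤ g (i+1) + 1 := by
        intro i
        have hp := take_misses_step P t i
        have hqm := take_misses_step Q t i
        have hle1 := misses_take_le Q t i
        have hle2 := misses_take_le Q t (i+1)
        simp only [hg]; omega
      have hgl : g t.length = P.misses t := by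
        simp [hg, List.take_length]
      have hgz : g 0 = Q.misses t := by
        have : Q.misses (t.take 0) = 0 := rfl
        have h0 : P.misses (t.take 0) = 0 := rfl
        simp only [hg, this, h0]; omega
      obtain ⟨i, hi⟩ := nat_ivt' g hstep t.length k (by omega) (by omega)
      have hspec := hybrid_spec P Q hB hPn' b0 t i
      refine ⟨hybrid P Q hB b0 t i, by rw [hspec.1, ht], hspec.2.1, ?_⟩
      rw [hspec.2.2]
      exact hi
    · set g : ℕ → ℕ :=
        fun i => P.misses (t'.take i) + (Q.misses t' - Q.misses (t'.take i)) with hg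
      have hstep : ∀ i, g (i+1) ≤ g i + 1 := by
        intro i
        have hp := take_misses_step P t' i
        have hqm := take_misses_step Q t' i
        have hle1 := misses_take_le Q t' i
        have hle2 := misses_take_le Q t' (i+1)
        simp only [hg]; omega
      have hgl : g t'.length = P.misses t' := by
        simp [hg, List.take_length]
      have hgz : g 0 = Q.misses t' := by
        have h1 : Q.misses (t'.take 0) = 0 := rfl
        have h0 : P.misses (t'.take 0) = 0 := rfl
        simp only [hg, h1, h0]; omega
      obtain ⟨i, hi⟩ := nat_ivt g hstep t'.length k (by omega) (by omega)
      have hspec := hybrid_spec P Q hB hPn' b0 t' i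
      refine ⟨hybrid P Q hB b0 t' i, by rw [hspec.1, ht'], ?_, ?_⟩
      · rw [hspec.2.1, hQeq]
      · rw [hspec.2.2]
        exact hi
end

section
/- For all cache algorithms P and Q, all lengths l, and all pairs of Q-equivalent traces t1, t2 ∈ B^l, the difference in misses under P is bounded by the leak ratio: P(t2) − P(t1) ≤ r_{P,Q}(l) − 1. -/
variable {B : Type} [DecidableEq B]

namespace LeakProofAux

lemma missesFrom_nil (P : CacheAlg B) (g : P.Config) : P.missesFrom g [] = 0 := rfl

lemma missesFrom_cons (P : CacheAlg B) (g : P.Config) (b : B) (t : List B) :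
    P.missesFrom g (b :: t) =
      (if ∃ j, g.2 j = some b then 0 else 1) + P.missesFrom (P.upd g b) t := rfl

lemma missesFrom_le_length (P : CacheAlg B) :
    ∀ (t : List B) (g : P.Config), P.missesFrom g t ≤ t.length := by
  intro t
  induction t with
  | nil => intro g; simp [missesFrom_nil]
  | cons b r ih =>
    intro g
    rw [missesFrom_cons]
    have := ih (P.upd g b)
    split_ifs <;> simp [List.length_cons] <;> omega

/-- after updating with `b`, block `b` is in the cache -/
lemma mem_upd_self (P : CacheAlg B) (g : P.Config) (b : B) :
    ∃ j, (P.upd g b).2 j = some b := by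
  unfold CacheAlg.upd
  by_cases h : ∃ j, g.2 j = some b
  · rw [dif_pos h]; exact h
  · rw [dif_neg h]
    exact ⟨(P.evict g.1 b).2, by simp⟩

/-- on a hit, cache contents are unchanged -/
lemma upd_hit_snd (P : CacheAlg B) (g : P.Config) (b : B)
    (h : ∃ j, g.2 j = some b) : (P.upd g b).2 = g.2 := by
  unfold CacheAlg.upd
  rw [dif_pos h]

/-- there is a block absent from both caches -/
lemma exists_fresh (P Q : CacheAlg B) (hB : (P.n + Q.n : Cardinal) < Cardinal.mk B)
    (gP : P.Config) (gQ : Q.Config) :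
    ∃ b : B, (¬ ∃ j, gP.2 j = some b) ∧ (¬ ∃ j, gQ.2 j = some b) := by
  classical
  by_contra h
  have hall : ∀ b : B, (∃ j, gP.2 j = some b) ∨ (∃ j, gQ.2 j = some b) := by
    intro b
    by_contra hb
    push_neg at hb
    exact h ⟨b, by push_neg; exact hb.1, by push_neg; exact hb.2⟩
  set f : B → (Fin P.n ⊕ Fin Q.n) := fun b =>
    if hp : ∃ j, gP.2 j = some b then Sum.inl hp.choose
    else Sum.inr ((hall b).resolve_left hp).choose with hfdef
  have hinj : Function.Injective f := by
    intro a b hab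
    by_cases ha : ∃ j, gP.2 j = some a <;> by_cases hb : ∃ j, gP.2 j = some b
    · rw [hfdef] at hab
      simp only [dif_pos ha, dif_pos hb] at hab
      have h1 := ha.choose_spec
      have h2 := hb.choose_spec
      rw [Sum.inl.injEq] at hab
      rw [hab] at h1
      rw [h1] at h2
      exact Option.some_injective _ h2
    · rw [hfdef] at hab; simp only [dif_pos ha, dif_neg hb] at hab
      exact absurd hab (by simp)
    · rw [hfdef] at hab; simp only [dif_neg ha, dif_pos hb] at hab
      exact absurd hab (by simp)
    · rw [hfdef] at hab
      simp only [dif_neg ha, dif_neg hb] at hab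
      have h1 := ((hall a).resolve_left ha).choose_spec
      have h2 := ((hall b).resolve_left hb).choose_spec
      rw [Sum.inr.injEq] at hab
      rw [hab] at h1
      rw [h1] at h2
      exact Option.some_injective _ h2
  have hle : Cardinal.mk B ≤ Cardinal.mk (Fin P.n ⊕ Fin Q.n) :=
    Cardinal.mk_le_of_injective hinj
  have heq : Cardinal.mk (Fin P.n ⊕ Fin Q.n) = (P.n + Q.n : Cardinal) := by
    simp
  rw [heq] at hle
  exact absurd hle (not_le.mpr hB)

/-- from a configuration pair with a common cached block, any number `a ≤ k` of
simultaneous misses can be realized exactly in `k` steps -/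
lemma manual (P Q : CacheAlg B) (hB : (P.n + Q.n : Cardinal) < Cardinal.mk B) :
    ∀ (k a : ℕ) (gP : P.Config) (gQ : Q.Config), a ≤ k →
      (0 < k → a = 0 → ∃ b, (∃ j, gP.2 j = some b) ∧ (∃ j, gQ.2 j = some b)) →
      ∃ u : List B, u.length = k ∧ P.missesFrom gP u = a ∧ Q.missesFrom gQ u = a := by
  intro k
  induction k with
  | zero =>
    intro a gP gQ ha _
    obtain rfl : a = 0 := by omega
    exact ⟨[], rfl, rfl, rfl⟩
  | succ k ih =>
    intro a gP gQ ha hcom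
    match a with
    | 0 =>
      obtain ⟨b, hbP, hbQ⟩ := hcom (Nat.succ_pos k) rfl
      obtain ⟨u, hu1, hu2, hu3⟩ := ih 0 (P.upd gP b) (Q.upd gQ b) (Nat.zero_le _)
        (fun _ _ => ⟨b, by rw [upd_hit_snd P gP b hbP]; exact hbP,
          by rw [upd_hit_snd Q gQ b hbQ]; exact hbQ⟩)
      exact ⟨b :: u, by simp [hu1],
        by rw [missesFrom_cons, if_pos hbP, hu2],
        by rw [missesFrom_cons, if_pos hbQ, hu3]⟩
    | a + 1 =>
      obtain ⟨b, hbP, hbQ⟩ := exists_fresh P Q hB gP gQ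
      obtain ⟨u, hu1, hu2, hu3⟩ := ih a (P.upd gP b) (Q.upd gQ b) (by omega)
        (fun _ _ => ⟨b, mem_upd_self P gP b, mem_upd_self Q gQ b⟩)
      refine ⟨b :: u, by simp [hu1], ?_, ?_⟩
      · rw [missesFrom_cons, if_neg hbP, hu2]; omega
      · rw [missesFrom_cons, if_neg hbQ, hu3]; omega

/-- discrete intermediate value theorem: from a configuration pair with a common
cached block, every P-miss count between the Q-miss count and the P-miss count of
`t` is realizable while keeping the Q-miss count of `t`. -/
lemma ivt (P Q : CacheAlg B) (hB : (P.n + Q.n : Cardinal) < Cardinal.mk B) :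
    ∀ (t : List B) (gP : P.Config) (gQ : Q.Config),
      (∃ b, (∃ j, gP.2 j = some b) ∧ (∃ j, gQ.2 j = some b)) →
      ∀ p : ℕ, min (Q.missesFrom gQ t) (P.missesFrom gP t) ≤ p →
        p ≤ max (Q.missesFrom gQ t) (P.missesFrom gP t) →
        ∃ u : List B, u.length = t.length ∧
          Q.missesFrom gQ u = Q.missesFrom gQ t ∧ P.missesFrom gP u = p := by
  intro t
  induction t with
  | nil =>
    intro gP gQ _ p h1 h2
    rw [missesFrom_nil, missesFrom_nil] at h1 h2
    exact ⟨[], rfl, rfl, by rw [missesFrom_nil]; omega⟩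
  | cons b r ih =>
    intro gP gQ hcom p h1 h2
    by_cases hpc : p = Q.missesFrom gQ (b :: r)
    · obtain ⟨u, hu1, hu2, hu3⟩ := manual P Q hB (b :: r).length (Q.missesFrom gQ (b :: r))
        gP gQ (missesFrom_le_length Q _ gQ) (fun _ _ => hcom)
      exact ⟨u, hu1, hu3, by rw [hu2, hpc]⟩
    · have hcQ := missesFrom_cons Q gQ b r
      have hcP := missesFrom_cons P gP b r
      have hcom' : ∃ b', (∃ j, (P.upd gP b).2 j = some b') ∧ (∃ j, (Q.upd gQ b).2 j = some b') :=
        ⟨b, mem_upd_self P gP b, mem_upd_self Q gQ b⟩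
      by_cases hP : ∃ j, gP.2 j = some b <;> by_cases hQ : ∃ j, gQ.2 j = some b
      · rw [if_pos hP] at hcP
        rw [if_pos hQ] at hcQ
        rw [hcP] at h1 h2
        rw [hcQ] at h1 h2 hpc
        obtain ⟨u, hu1, hu2, hu3⟩ := ih (P.upd gP b) (Q.upd gQ b) hcom' p (by omega) (by omega)
        refine ⟨b :: u, by simp [hu1], ?_, ?_⟩
        · rw [missesFrom_cons, if_pos hQ, hu2, hcQ]
        · rw [missesFrom_cons, if_pos hP, hu3]; omega
      · rw [if_pos hP] at hcP
        rw [if_neg hQ] at hcQ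
        rw [hcP] at h1 h2
        rw [hcQ] at h1 h2 hpc
        obtain ⟨u, hu1, hu2, hu3⟩ := ih (P.upd gP b) (Q.upd gQ b) hcom' p (by omega) (by omega)
        refine ⟨b :: u, by simp [hu1], ?_, ?_⟩
        · rw [missesFrom_cons, if_neg hQ, hu2, hcQ]
        · rw [missesFrom_cons, if_pos hP, hu3]; omega
      · rw [if_neg hP] at hcP
        rw [if_pos hQ] at hcQ
        rw [hcP] at h1 h2
        rw [hcQ] at h1 h2 hpc
        obtain ⟨u, hu1, hu2, hu3⟩ := ih (P.upd gP b) (Q.upd gQ b) hcom' (p - 1)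
          (by omega) (by omega)
        refine ⟨b :: u, by simp [hu1], ?_, ?_⟩
        · rw [missesFrom_cons, if_pos hQ, hu2, hcQ]
        · rw [missesFrom_cons, if_neg hP, hu3]; omega
      · rw [if_neg hP] at hcP
        rw [if_neg hQ] at hcQ
        rw [hcP] at h1 h2
        rw [hcQ] at h1 h2 hpc
        obtain ⟨u, hu1, hu2, hu3⟩ := ih (P.upd gP b) (Q.upd gQ b) hcom' (p - 1)
          (by omega) (by omega)
        refine ⟨b :: u, by simp [hu1], ?_, ?_⟩
        · rw [missesFrom_cons, if_neg hQ, hu2, hcQ]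
        · rw [missesFrom_cons, if_neg hP, hu3]; omega

/-- interval property from the initial configuration -/
lemma chain (P Q : CacheAlg B) (hB : (P.n + Q.n : Cardinal) < Cardinal.mk B)
    (t : List B) (p : ℕ)
    (h1 : min (Q.misses t) (P.misses t) ≤ p) (h2 : p ≤ max (Q.misses t) (P.misses t)) :
    ∃ u : List B, u.length = t.length ∧ Q.misses u = Q.misses t ∧ P.misses u = p := by
  cases t with
  | nil =>
    refine ⟨[], rfl, rfl, ?_⟩
    unfold CacheAlg.misses at h1 h2 ⊢
    simp only [missesFrom_nil] at h1 h2 ⊢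
    omega
  | cons b r =>
    have hP : ¬ ∃ j, (P.initConfig).2 j = some b := by simp [CacheAlg.initConfig]
    have hQ : ¬ ∃ j, (Q.initConfig).2 j = some b := by simp [CacheAlg.initConfig]
    unfold CacheAlg.misses at h1 h2 ⊢
    have hcQ := missesFrom_cons Q Q.initConfig b r
    have hcP := missesFrom_cons P P.initConfig b r
    rw [if_neg hP] at hcP
    rw [if_neg hQ] at hcQ
    rw [hcP, hcQ] at h1 h2
    have hcom' : ∃ b', (∃ j, (P.upd P.initConfig b).2 j = some b') ∧
        (∃ j, (Q.upd Q.initConfig b).2 j = some b') :=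
      ⟨b, mem_upd_self P _ b, mem_upd_self Q _ b⟩
    obtain ⟨u, hu1, hu2, hu3⟩ := ivt P Q hB r (P.upd P.initConfig b) (Q.upd Q.initConfig b)
      hcom' (p - 1) (by omega) (by omega)
    refine ⟨b :: u, by simp [hu1], ?_, ?_⟩
    · rw [missesFrom_cons, if_neg hQ, hu2, hcQ]
    · rw [missesFrom_cons, if_neg hP, hu3]; omega

end LeakProofAux

theorem miss_diff_le_leakRatio (P Q : CacheAlg B)
    (hB : (P.n + Q.n : Cardinal) < Cardinal.mk B)
    (l : ℕ) (t1 t2 : List B) (ht1 : t1.length = l) (ht2 : t2.length = l)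
    (hQeq : Q.misses t1 = Q.misses t2) :
    (P.misses t2 : ℝ) - (P.misses t1 : ℝ) ≤ leakRatio P Q l - 1 := by
  classical
  open LeakProofAux in
  -- notation
  set p1 := P.misses t1 with hp1
  set p2 := P.misses t2 with hp2
  set c := Q.misses t1 with hc
  set m := min p1 p2 with hm
  set M := max p1 p2 with hM
  -- witnesses: for each x in [m, M], a trace of length l with Q-misses c and P-misses x
  have key : ∀ x, m ≤ x → x ≤ M →
      ∃ u : List B, u.length = l ∧ Q.misses u = c ∧ P.misses u = x := by
    intro x hx1 hx2
    by_cases hxc : c ≤ x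
    · -- use the trace with the larger P-miss count
      rcases le_or_gt p1 p2 with h12 | h12
      · obtain ⟨u, hu1, hu2, hu3⟩ := LeakProofAux.chain P Q hB t2 x
          (by rw [← hQeq]; omega) (by rw [← hQeq]; omega)
        exact ⟨u, by rw [hu1, ht2], by rw [hu2, ← hQeq], hu3⟩
      · obtain ⟨u, hu1, hu2, hu3⟩ := LeakProofAux.chain P Q hB t1 x
          (by omega) (by omega)
        exact ⟨u, by rw [hu1, ht1], hu2, hu3⟩
    · -- x < c : use the trace with the smaller P-miss count
      rcases le_or_gt p1 p2 with h12 | h12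
      · obtain ⟨u, hu1, hu2, hu3⟩ := LeakProofAux.chain P Q hB t1 x
          (by omega) (by omega)
        exact ⟨u, by rw [hu1, ht1], hu2, hu3⟩
      · obtain ⟨u, hu1, hu2, hu3⟩ := LeakProofAux.chain P Q hB t2 x
          (by rw [← hQeq]; omega) (by rw [← hQeq]; omega)
        exact ⟨u, by rw [hu1, ht2], by rw [hu2, ← hQeq], hu3⟩
  -- choose witnesses
  choose! f hf1 hf2 hf3 using key
  set T : Finset (List B) := (Finset.Icc m M).image f with hT
  have hmM : m ≤ M := min_le_max
  have hTne : T.Nonempty := by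
    rw [hT]
    exact ((Finset.nonempty_Icc).mpr hmM).image f
  have hTlen : ∀ t ∈ T, t.length = l := by
    intro t ht
    rw [hT, Finset.mem_image] at ht
    obtain ⟨x, hx, rfl⟩ := ht
    rw [Finset.mem_Icc] at hx
    exact hf1 x hx.1 hx.2
  -- P-image is exactly Icc m M
  have hPimg : T.image P.misses = Finset.Icc m M := by
    rw [hT, Finset.image_image]
    apply Finset.ext
    intro y
    simp only [Finset.mem_image, Function.comp_apply, Finset.mem_Icc]
    constructor
    · rintro ⟨x, hx, rfl⟩
      rw [hf3 x hx.1 hx.2]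
      exact hx
    · intro hy
      exact ⟨y, hy, hf3 y hy.1 hy.2⟩
  -- Q-image is the singleton {c}
  have hQimg : T.image Q.misses = {c} := by
    apply Finset.eq_singleton_iff_nonempty_unique_mem.mpr
    refine ⟨hTne.image _, ?_⟩
    intro y hy
    rw [Finset.mem_image] at hy
    obtain ⟨t, ht, rfl⟩ := hy
    rw [hT, Finset.mem_image] at ht
    obtain ⟨x, hx, rfl⟩ := ht
    rw [Finset.mem_Icc] at hx
    exact hf2 x hx.1 hx.2
  -- the ratio (M - m + 1) is in the leakRatio set
  have hmem : ((M - m + 1 : ℕ) : ℝ) ∈ {r : ℝ | ∃ T : Finset (List B), T.Nonempty ∧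
      (∀ t ∈ T, t.length = l) ∧
      r = ((T.image P.misses).card : ℝ) / ((T.image Q.misses).card : ℝ)} := by
    refine ⟨T, hTne, hTlen, ?_⟩
    rw [hPimg, hQimg, Nat.card_Icc, Finset.card_singleton, Nat.cast_one, div_one]
    congr 1
    omega
  -- the set is bounded above by l + 1
  have hbdd : BddAbove {r : ℝ | ∃ T : Finset (List B), T.Nonempty ∧
      (∀ t ∈ T, t.length = l) ∧
      r = ((T.image P.misses).card : ℝ) / ((T.image Q.misses).card : ℝ)} := by
    refine ⟨(l + 1 : ℝ), ?_⟩
    rintro r ⟨T', hT'ne, hT'len, rfl⟩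
    have hcard : (T'.image P.misses).card ≤ l + 1 := by
      have hsub : T'.image P.misses ⊆ Finset.range (l + 1) := by
        intro y hy
        rw [Finset.mem_image] at hy
        obtain ⟨t, ht, rfl⟩ := hy
        rw [Finset.mem_range]
        have := LeakProofAux.missesFrom_le_length P t P.initConfig
        have := hT'len t ht
        unfold CacheAlg.misses
        omega
      calc (T'.image P.misses).card ≤ (Finset.range (l + 1)).card :=
            Finset.card_le_card hsub
        _ = l + 1 := Finset.card_range _
    have hqpos : (1 : ℝ) ≤ ((T'.image Q.misses).card : ℝ) := by
      have : 0 < (T'.image Q.misses).card := Finset.card_pos.mpr (hT'ne.image _)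
      exact_mod_cast this
    calc ((T'.image P.misses).card : ℝ) / ((T'.image Q.misses).card : ℝ)
        ≤ ((T'.image P.misses).card : ℝ) := by
          apply div_le_self (by positivity) hqpos
      _ ≤ (l + 1 : ℝ) := by exact_mod_cast hcard
  have hsup : ((M - m + 1 : ℕ) : ℝ) ≤ leakRatio P Q l := le_csSup hbdd hmem
  -- conclude
  have h1 : (p2 : ℝ) - (p1 : ℝ) ≤ ((M - m + 1 : ℕ) : ℝ) - 1 := by
    have hp2M : p2 ≤ M := le_max_right _ _
    have hmp1 : m ≤ p1 := min_le_left _ _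
    have : (M - m + 1 : ℕ) = M - m + 1 := rfl
    rw [Nat.cast_add, Nat.cast_sub (by omega), Nat.cast_one]
    linarith [show (p2 : ℝ) ≤ (M : ℝ) from by exact_mod_cast hp2M,
      show (m : ℝ) ≤ (p1 : ℝ) from by exact_mod_cast hmp1]
  linarith
end

section
/- Every finite set T of traces of equal length that maximizes the ratio |P(T)|/|Q(T)| (i.e., |P(T)|/|Q(T)| = r_{P,Q}(l)) contains a subset T1 of Q-equivalent traces with |P(T1)| = r_{P,Q}(l). -/
variable {B : Type} [DecidableEq B]

lemma CacheAlg.missesFrom_le (P : CacheAlg B) (g : P.Config) (t : List B) :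
    P.missesFrom g t ≤ t.length := by
  induction t generalizing g with
  | nil => simp [CacheAlg.missesFrom]
  | cons b t ih =>
    simp only [CacheAlg.missesFrom, List.length_cons]
    have := ih (P.upd g b)
    split <;> omega

lemma leak_bddAbove (P Q : CacheAlg B) (l : ℕ) :
    BddAbove {r : ℝ | ∃ T : Finset (List B), T.Nonempty ∧ (∀ t ∈ T, t.length = l) ∧
      r = ((T.image P.misses).card : ℝ) / ((T.image Q.misses).card : ℝ)} := by
  refine ⟨(l : ℝ) + 1, ?_⟩
  rintro r ⟨T, hne, hlen, rfl⟩
  have h1 : T.image P.misses ⊆ Finset.range (l + 1) := by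
    intro m hm
    simp only [Finset.mem_image] at hm
    obtain ⟨t, ht, rfl⟩ := hm
    have h := P.missesFrom_le P.initConfig t
    rw [hlen t ht] at h
    simp only [Finset.mem_range, CacheAlg.misses]
    omega
  have hcard : (T.image P.misses).card ≤ l + 1 := by
    simpa using Finset.card_le_card h1
  have hQ : (1 : ℝ) ≤ ((T.image Q.misses).card : ℝ) := by
    exact_mod_cast Finset.card_pos.mpr (hne.image _)
  have hQ0 : (0 : ℝ) < ((T.image Q.misses).card : ℝ) := lt_of_lt_of_le one_pos hQ
  rw [div_le_iff₀ hQ0]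
  calc ((T.image P.misses).card : ℝ) ≤ (l : ℝ) + 1 := by exact_mod_cast hcard
    _ = ((l : ℝ) + 1) * 1 := by ring
    _ ≤ ((l : ℝ) + 1) * ((T.image Q.misses).card : ℝ) := by
        apply mul_le_mul_of_nonneg_left hQ
        positivity

theorem maximizing_set_contains_equivalent_subset (P Q : CacheAlg B)
    (l : ℕ) (T : Finset (List B)) (hne : T.Nonempty)
    (hlen : ∀ t ∈ T, t.length = l)
    (hmax : ((T.image P.misses).card : ℝ) / ((T.image Q.misses).card : ℝ) =
      leakRatio P Q l) :
    ∃ T1 ⊆ T, T1.Nonempty ∧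
      (∀ t1 ∈ T1, ∀ t2 ∈ T1, Q.misses t1 = Q.misses t2) ∧
      ((T1.image P.misses).card : ℝ) = leakRatio P Q l := by
  classical
  set r := leakRatio P Q l with hr
  set I := T.image Q.misses with hI
  set Tq : ℕ → Finset (List B) := fun q => T.filter (fun t => Q.misses t = q) with hTq
  -- each class ratio is ≤ r
  have hclass : ∀ q ∈ I, (((Tq q).image P.misses).card : ℝ) ≤ r := by
    intro q hq
    simp only [hI, Finset.mem_image] at hq
    obtain ⟨t0, ht0, hq0⟩ := hq
    have hne' : (Tq q).Nonempty := ⟨t0, by simp [hTq, Finset.mem_filter, ht0, hq0]⟩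
    have hcardQ : ((Tq q).image Q.misses) = {q} := by
      apply Finset.eq_singleton_iff_nonempty_unique_mem.mpr
      refine ⟨hne'.image _, ?_⟩
      intro m hm
      simp only [Finset.mem_image, hTq, Finset.mem_filter] at hm
      obtain ⟨t, ⟨_, h⟩, rfl⟩ := hm
      exact h
    have : (((Tq q).image P.misses).card : ℝ) / (((Tq q).image Q.misses).card : ℝ)
        ≤ r := by
      apply le_csSup (leak_bddAbove P Q l)
      exact ⟨Tq q, hne', fun t ht => hlen t (Finset.mem_filter.mp ht).1, rfl⟩
    simpa [hcardQ] using this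
  -- |P(T)| ≤ Σ over classes
  have hcover : T.image P.misses ⊆ I.biUnion (fun q => (Tq q).image P.misses) := by
    intro m hm
    simp only [Finset.mem_image] at hm
    obtain ⟨t, ht, rfl⟩ := hm
    apply Finset.mem_biUnion.mpr
    refine ⟨Q.misses t, Finset.mem_image_of_mem _ ht, ?_⟩
    exact Finset.mem_image_of_mem _ (by simp [hTq, Finset.mem_filter, ht])
  have hsum : (T.image P.misses).card ≤ ∑ q ∈ I, ((Tq q).image P.misses).card :=
    le_trans (Finset.card_le_card hcover) (Finset.card_biUnion_le)
  -- cast: |P(T)| = r * |I|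
  have hIne : I.Nonempty := hne.image _
  have hI0 : (0 : ℝ) < (I.card : ℝ) := by exact_mod_cast Finset.card_pos.mpr hIne
  have hPT : ((T.image P.misses).card : ℝ) = r * I.card := by
    rw [← hmax, div_mul_cancel₀]
    exact ne_of_gt hI0
  have hsumR : r * I.card ≤ ∑ q ∈ I, (((Tq q).image P.misses).card : ℝ) := by
    rw [← hPT]
    exact_mod_cast hsum
  -- pick a class
  obtain ⟨t0, ht0⟩ := hne
  set q0 := Q.misses t0 with hq0
  have hq0I : q0 ∈ I := Finset.mem_image_of_mem _ ht0
  have heq : (((Tq q0).image P.misses).card : ℝ) = r := by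
    by_contra h
    have hlt : (((Tq q0).image P.misses).card : ℝ) < r :=
      lt_of_le_of_ne (hclass q0 hq0I) h
    have : ∑ q ∈ I, (((Tq q).image P.misses).card : ℝ) < ∑ _q ∈ I, r :=
      Finset.sum_lt_sum (fun i hi => hclass i hi) ⟨q0, hq0I, hlt⟩
    rw [Finset.sum_const, nsmul_eq_mul, mul_comm] at this
    linarith [hsumR]
  refine ⟨Tq q0, Finset.filter_subset _ _, ⟨t0, by simp [hTq, Finset.mem_filter, ht0, hq0]⟩,
    ?_, heq⟩
  intro t1 h1 t2 h2
  rw [(Finset.mem_filter.mp h1).2, (Finset.mem_filter.mp h2).2]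
end

section
/- Let π : B → B be a bijection on memory blocks, lifted to cache contents by π*(c)(j) = π(c(j)) if c(j) ∈ B and ⊥ otherwise, to configurations by π*(s,c) = (s, π*(c)), and to traces elementwise. If the eviction function of cache algorithm P is independent of the accessed block, then for every configuration (s,c) and every trace t: π*(update_P((s,c), t)) = update_P(π*(s,c), π*(t)). -/
variable {B : Type} [DecidableEq B]

lemma rename_commutes_upd (P : CacheAlg B) (hEvict : P.EvictBlockIndep)
    (π : B ≃ B) (g : P.Config) (b : B) :
    P.renameConfig π (P.upd g b) = P.upd (P.renameConfig π g) (π b) := by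
  have hpred : (fun j => g.2 j = some b) =
      (fun j => (P.renameConfig π g).2 j = some (π b)) := by
    funext j
    apply propext
    simp only [CacheAlg.renameConfig, renameContent]
    cases hc : g.2 j <;> simp [hc, π.injective.eq_iff]
  unfold CacheAlg.upd
  by_cases h : ∃ j, g.2 j = some b
  · have h' : ∃ j, (P.renameConfig π g).2 j = some (π b) := hpred ▸ h
    rw [dif_pos h, dif_pos h']
    have hch : h.choose = h'.choose := by
      revert h h'
      rw [show (fun j => (P.renameConfig π g).2 j = some (π b)) =
          (fun j => g.2 j = some b) from hpred.symm]
      intro h h'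
      rfl
    simp [CacheAlg.renameConfig, hch]
  · have h' : ¬ ∃ j, (P.renameConfig π g).2 j = some (π b) := hpred ▸ h
    rw [dif_neg h, dif_neg h']
    have he : P.evict g.1 b = P.evict g.1 (π b) := hEvict _ _ _
    simp only [CacheAlg.renameConfig, ← he]
    refine Prod.ext rfl ?_
    funext j
    simp only [renameContent]
    by_cases hj : j = (P.evict g.1 b).2 <;> simp [hj, Function.update, renameContent]

theorem rename_commutes_update (P : CacheAlg B) (hEvict : P.EvictBlockIndep)
    (π : B ≃ B) (g : P.Config) (t : List B) :
    P.renameConfig π (P.updTrace g t) =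
      P.updTrace (P.renameConfig π g) (t.map π) := by
  induction t generalizing g with
  | nil => rfl
  | cons b t ih =>
    simp only [List.map_cons, CacheAlg.updTrace, ih, rename_commutes_upd P hEvict]
end

section
/- Let P and Q be cache algorithms with finite control-state sets S_P and S_Q and block-independent eviction. Then the quotient of G_P × G_Q by the congruence relation ≡ is finite; in fact its cardinality is at most |S_P|·|S_Q|·(n_P + n_Q + 1)^{n_P + n_Q}. -/
variable {B : Type} [DecidableEq B]

section Aux

variable {B : Type} [DecidableEq B]

/-- First index at which block `b` appears in cache contents `c`. -/
noncomputable def firstIdx {n : ℕ} (c : Fin n → Option B) (b : B) : Option (Fin n) :=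
  (List.finRange n).find? (fun j => decide (c j = some b))

theorem firstIdx_mem {n : ℕ} {c : Fin n → Option B} {b : B} {j : Fin n}
    (h : firstIdx c b = some j) : c j = some b := by
  have := List.find?_some h
  simpa using this

theorem firstIdx_isSome {n : ℕ} {c : Fin n → Option B} {b : B} {i : Fin n}
    (h : c i = some b) : ∃ j, firstIdx c b = some j := by
  rcases ho : firstIdx c b with _ | j
  · rw [firstIdx, List.find?_eq_none] at ho
    exact absurd (ho i (List.mem_finRange i)) (by simpa using h)
  · exact ⟨j, rfl⟩

/-- Canonical pattern of cache contents: replace each block by its first index. -/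
noncomputable def canon {n : ℕ} (c : Fin n → Option B) : Fin n → Option (Fin n) :=
  fun i => (c i).bind (firstIdx c)

theorem firstIdx_rename {n : ℕ} (π : B ≃ B) (c : Fin n → Option B) (b : B) :
    firstIdx (fun i => (c i).map π) (π b) = firstIdx c b := by
  unfold firstIdx
  congr 1
  funext j
  have : ((c j).map π = some (π b)) ↔ (c j = some b) := by
    cases c j with
    | none => simp
    | some a => simp [π.injective.eq_iff]
  simp [this]

theorem canon_rename {n : ℕ} (π : B ≃ B) (c : Fin n → Option B) :
    canon (fun i => (c i).map π) = canon c := by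
  funext i
  unfold canon
  cases h : c i with
  | none => simp [h]
  | some b => simp [h, firstIdx_rename π c b]

theorem canon_eq_firstIdx {n : ℕ} {c : Fin n → Option B} {i : Fin n} {b : B}
    (h : c i = some b) : canon c i = firstIdx c b := by
  simp [canon, h]

/-- membership pattern characterization: `c i = some b ↔ canon c i = firstIdx c b`,
given `b` occurs in `c`. -/
theorem mem_iff_canon {n : ℕ} {c : Fin n → Option B} {b : B} {j : Fin n}
    (hj : firstIdx c b = some j) (i : Fin n) :
    c i = some b ↔ canon c i = some j := by
  constructor
  · intro h; rw [canon_eq_firstIdx h, hj]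
  · intro h
    rcases hb : c i with _ | b2
    · simp [canon, hb] at h
    · have h2 : firstIdx c b2 = some j := by
        rw [canon_eq_firstIdx hb] at h; exact h
      rw [← firstIdx_mem h2, firstIdx_mem hj]

theorem canon_injective_up_to_rename {n : ℕ} {c c' : Fin n → Option B}
    [Infinite B] (h : canon c = canon c') :
    ∃ π : B ≃ B, ∀ i, (c i).map π = c' i := by
  classical
  -- for each block b in c, there is a unique corresponding block in c'
  have key : ∀ b : B, (∃ i, c i = some b) → ∃ b' : B, ∀ i, c' i = some b' ↔ c i = some b := by
    intro b ⟨i, hi⟩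
    obtain ⟨j, hj⟩ := firstIdx_isSome hi
    have hcj : c j = some b := firstIdx_mem hj
    have hcanj : canon c j = some j := by rw [canon_eq_firstIdx hcj, hj]
    have hcanj' : canon c' j = some j := by rw [← h]; exact hcanj
    rcases hb' : c' j with _ | b'
    · simp [canon, hb'] at hcanj'
    · have hj' : firstIdx c' b' = some j := by
        rw [canon_eq_firstIdx hb'] at hcanj'; exact hcanj'
      refine ⟨b', fun i' => ?_⟩
      rw [mem_iff_canon hj' i', mem_iff_canon hj i', h]
  -- the set of blocks appearing in c
  let s : Set B := {b | ∃ i, c i = some b}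
  have hs : s.Finite := by
    have : s = Option.some ⁻¹' (Set.range c) := by
      ext b; simp [s, Set.mem_preimage, Set.mem_range, eq_comm]
    rw [this]
    exact (Set.finite_range c).preimage (Option.some_injective B).injOn
  -- partial map
  let φ : s → B := fun b => (key b.1 b.2).choose
  have hφ : ∀ (b : s) (i : Fin n), c' i = some (φ b) ↔ c i = some b.1 :=
    fun b => (key b.1 b.2).choose_spec
  have hφinj : Function.Injective φ := by
    rintro ⟨b1, i1, hi1⟩ ⟨b2, i2, hi2⟩ heq
    have h1 : c' i1 = some (φ ⟨b1, i1, hi1⟩) := (hφ ⟨b1, i1, hi1⟩ i1).2 hi1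
    rw [heq] at h1
    have h2 : c i1 = some b2 := (hφ ⟨b2, i2, hi2⟩ i1).1 h1
    have : b1 = b2 := by
      have := hi1.symm.trans h2; exact Option.some.inj this
    exact Subtype.ext this
  have hslt : (Cardinal.mk s) < Cardinal.mk B := by
    have : Finite s := hs.to_subtype
    exact lt_of_lt_of_le (Cardinal.lt_aleph0_of_finite s) (Cardinal.aleph0_le_mk B)
  obtain ⟨π, hπ⟩ := Cardinal.extend_function_of_lt ⟨φ, hφinj⟩ hslt ⟨Equiv.refl B⟩
  refine ⟨π, fun i => ?_⟩
  rcases hi : c i with _ | b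
  · -- c' i must be none too
    rcases hi' : c' i with _ | b'
    · simp
    · obtain ⟨j, hj⟩ := firstIdx_isSome hi'
      have : canon c' i = some j := by rw [canon_eq_firstIdx hi', hj]
      rw [← h] at this
      simp [canon, hi] at this
  · have hb : b ∈ s := ⟨i, hi⟩
    have : π b = φ ⟨b, hb⟩ := hπ ⟨b, hb⟩
    simp only [Option.map_some]
    rw [this]
    exact ((hφ ⟨b, hb⟩ i).2 hi).symm

end Aux

theorem quotient_congruent_finite (P Q : CacheAlg B) [Infinite B]
    [Fintype P.S] [Fintype Q.S]
    (hP : P.EvictBlockIndep) (hQ : Q.EvictBlockIndep) :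
    Finite (Quot (CacheCongruent P Q)) ∧
    Nat.card (Quot (CacheCongruent P Q)) ≤
      Fintype.card P.S * Fintype.card Q.S * (P.n + Q.n + 1) ^ (P.n + Q.n) := by
  classical
  let enc : P.Config × Q.Config → P.S × Q.S × (Fin (P.n + Q.n) → Option (Fin (P.n + Q.n))) :=
    fun x => (x.1.1, x.2.1, canon (Fin.append x.1.2 x.2.2))
  have hlift : ∀ x y, CacheCongruent P Q x y → enc x = enc y := by
    rintro ⟨⟨s1, c1⟩, ⟨s2, c2⟩⟩ ⟨⟨s1', c1'⟩, ⟨s2', c2'⟩⟩ ⟨π, h1, h2⟩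
    simp only [CacheAlg.renameConfig, Prod.mk.injEq] at h1 h2
    obtain ⟨hs1, hc1⟩ := h1
    obtain ⟨hs2, hc2⟩ := h2
    have happ : Fin.append (renameContent π c1) (renameContent π c2) =
        fun i => ((Fin.append c1 c2) i).map π := by
      funext i
      induction i using Fin.addCases with
      | left j => simp [Fin.append_left, renameContent]
      | right j => simp [Fin.append_right, renameContent]
    simp only [enc]
    rw [← hc1, ← hc2, happ, canon_rename, hs1, hs2]
  have hinj : ∀ x y, enc x = enc y → CacheCongruent P Q x y := by
    rintro ⟨⟨s1, c1⟩, ⟨s2, c2⟩⟩ ⟨⟨s1', c1'⟩, ⟨s2', c2'⟩⟩ h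
    simp only [enc, Prod.mk.injEq] at h
    obtain ⟨hs1, hs2, hcanon⟩ := h
    obtain ⟨π, hπ⟩ := canon_injective_up_to_rename hcanon
    refine ⟨π, ?_, ?_⟩
    · refine Prod.ext hs1 ?_
      funext j
      simpa [Fin.append_left, renameContent, CacheAlg.renameConfig] using hπ (Fin.castAdd Q.n j)
    · refine Prod.ext hs2 ?_
      funext j
      simpa [Fin.append_right, renameContent, CacheAlg.renameConfig] using hπ (Fin.natAdd P.n j)
  let F : Quot (CacheCongruent P Q) → P.S × Q.S × (Fin (P.n + Q.n) → Option (Fin (P.n + Q.n))) :=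
    Quot.lift enc hlift
  have hFinj : Function.Injective F := by
    intro a b
    induction a using Quot.ind with | _ x => ?_
    induction b using Quot.ind with | _ y => ?_
    intro h
    exact Quot.sound (hinj x y h)
  have hfin : Finite (Quot (CacheCongruent P Q)) := Finite.of_injective F hFinj
  refine ⟨hfin, ?_⟩
  calc Nat.card (Quot (CacheCongruent P Q))
      ≤ Nat.card (P.S × Q.S × (Fin (P.n + Q.n) → Option (Fin (P.n + Q.n)))) :=
        Nat.card_le_card_of_injective F hFinj
    _ = Fintype.card P.S * Fintype.card Q.S * (P.n + Q.n + 1) ^ (P.n + Q.n) := by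
        simp [Nat.card_eq_fintype_card, Fintype.card_fun, mul_assoc]
end

section
/- Let P and Q be finite-control cache algorithms with block-independent eviction, and suppose the difference in misses between P and Q is unbounded, i.e., for every m ∈ ℕ there is a trace t with |P(t) − Q(t)| > m. Then the difference grows linearly: there exist f > 0 and m0 ∈ ℕ such that for all m > m0 there exists a trace t of length m with |P(t) − Q(t)| > f·|t|. -/
variable {B : Type} [DecidableEq B]

section Aux
set_option linter.unusedSectionVars false
variable {B : Type} [DecidableEq B]

private lemma choose_eq {α : Sort*} {p q : α → Prop} (h : ∀ a, p a ↔ q a)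
    (hp : ∃ a, p a) (hq : ∃ a, q a) : hp.choose = hq.choose := by
  have hpq : p = q := funext fun a => propext (h a)
  subst hpq; rfl

lemma rename_mem_iff (P : CacheAlg B) (π : B ≃ B) (g : P.Config) (b : B) (j : Fin P.n) :
    (P.renameConfig π g).2 j = some (π b) ↔ g.2 j = some b := by
  simp only [CacheAlg.renameConfig, renameContent]
  cases g.2 j with
  | none => simp
  | some a => simp [π.injective.eq_iff]

lemma upd_rename (P : CacheAlg B) (hP : P.EvictBlockIndep) (π : B ≃ B) (g : P.Config) (b : B) :
    P.upd (P.renameConfig π g) (π b) = P.renameConfig π (P.upd g b) := by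
  by_cases h : ∃ j, g.2 j = some b
  · have h' : ∃ j, (P.renameConfig π g).2 j = some (π b) :=
      ⟨h.choose, (rename_mem_iff P π g b _).2 h.choose_spec⟩
    rw [CacheAlg.upd, dif_pos h', CacheAlg.upd, dif_pos h]
    have hc : h'.choose = h.choose := choose_eq (fun j => rename_mem_iff P π g b j) h' h
    rw [hc]; rfl
  · have h' : ¬ ∃ j, (P.renameConfig π g).2 j = some (π b) := by
      rintro ⟨j, hj⟩; exact h ⟨j, (rename_mem_iff P π g b j).1 hj⟩
    rw [CacheAlg.upd, dif_neg h', CacheAlg.upd, dif_neg h]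
    have he : P.evict g.1 (π b) = P.evict g.1 b := hP _ _ _
    simp only [CacheAlg.renameConfig, he]
    refine Prod.ext rfl ?_
    funext k
    simp only [renameContent, Function.update]
    split <;> simp_all

lemma hit_rename_iff (P : CacheAlg B) (π : B ≃ B) (g : P.Config) (b : B) :
    (∃ j, (P.renameConfig π g).2 j = some (π b)) ↔ ∃ j, g.2 j = some b :=
  exists_congr fun j => rename_mem_iff P π g b j

lemma updTrace_rename (P : CacheAlg B) (hP : P.EvictBlockIndep) (π : B ≃ B) :
    ∀ (t : List B) (g : P.Config),
      P.updTrace (P.renameConfig π g) (t.map π) = P.renameConfig π (P.updTrace g t)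
  | [], g => rfl
  | b :: t, g => by
    simp only [List.map_cons, CacheAlg.updTrace, upd_rename P hP π g b]
    exact updTrace_rename P hP π t _

lemma missesFrom_rename (P : CacheAlg B) (hP : P.EvictBlockIndep) (π : B ≃ B) :
    ∀ (t : List B) (g : P.Config),
      P.missesFrom (P.renameConfig π g) (t.map π) = P.missesFrom g t
  | [], g => rfl
  | b :: t, g => by
    simp only [List.map_cons, CacheAlg.missesFrom, hit_rename_iff P π g b,
      upd_rename P hP π g b]
    rw [missesFrom_rename P hP π t _]

lemma missesFrom_append (P : CacheAlg B) :
    ∀ (t1 t2 : List B) (g : P.Config),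
      P.missesFrom g (t1 ++ t2) = P.missesFrom g t1 + P.missesFrom (P.updTrace g t1) t2
  | [], t2, g => by simp [CacheAlg.missesFrom, CacheAlg.updTrace]
  | b :: t1, t2, g => by
    simp only [List.cons_append, CacheAlg.missesFrom, List.append_eq]
    rw [missesFrom_append P t1 t2 (P.upd g b)]
    rw [show P.updTrace g (b :: t1) = P.updTrace (P.upd g b) t1 from rfl]
    ring

lemma updTrace_append (P : CacheAlg B) :
    ∀ (t1 t2 : List B) (g : P.Config),
      P.updTrace g (t1 ++ t2) = P.updTrace (P.updTrace g t1) t2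
  | [], t2, g => rfl
  | b :: t1, t2, g => by
    simp only [List.cons_append, CacheAlg.updTrace, List.append_eq]
    rw [updTrace_append P t1 t2 (P.upd g b)]

lemma renameConfig_mul (P : CacheAlg B) (σ τ : Equiv.Perm B) (g : P.Config) :
    P.renameConfig (σ * τ) g = P.renameConfig σ (P.renameConfig τ g) := by
  refine Prod.ext rfl ?_
  funext j
  simp [CacheAlg.renameConfig, renameContent, Option.map_map, Function.comp]

lemma upd_mem (P : CacheAlg B) (g : P.Config) (b : B) : ∃ j, (P.upd g b).2 j = some b := by
  rw [CacheAlg.upd]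
  split
  · next h => exact h
  · next h =>
    exact ⟨(P.evict g.1 b).2, by simp [Function.update]⟩

lemma missesFrom_replicate_zero (P : CacheAlg B) (b : B) :
    ∀ (p : ℕ) (g : P.Config), (∃ j, g.2 j = some b) →
      P.missesFrom g (List.replicate p b) = 0
  | 0, g, _ => rfl
  | p + 1, g, h => by
    have hu : (P.upd g b).2 = g.2 := by rw [CacheAlg.upd, dif_pos h]
    rw [List.replicate_succ, CacheAlg.missesFrom, if_pos h,
      missesFrom_replicate_zero P b p (P.upd g b) (by rw [hu]; exact h)]

lemma missesFrom_replicate_le (P : CacheAlg B) (b : B) (p : ℕ) (g : P.Config) :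
    P.missesFrom g (List.replicate p b) ≤ 1 := by
  cases p with
  | zero => exact Nat.zero_le 1
  | succ p =>
    rw [List.replicate_succ, CacheAlg.missesFrom,
      missesFrom_replicate_zero P b p (P.upd g b) (upd_mem P g b)]
    split <;> simp

lemma missesFrom_single_le (P : CacheAlg B) (b : B) (g : P.Config) :
    P.missesFrom g [b] ≤ 1 := by
  rw [CacheAlg.missesFrom, CacheAlg.missesFrom]
  split <;> simp

end Aux
section Inv
set_option linter.unusedSectionVars false
variable {B : Type} [DecidableEq B]

/-- Combined cache content of a pair of configurations. -/
def pcc (P Q : CacheAlg B) (x : P.Config × Q.Config) : (Fin P.n ⊕ Fin Q.n) → Option B :=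
  Sum.elim x.1.2 x.2.2

/-- Finite invariant of a pair of configurations, determining its congruence class. -/
def pinv (P Q : CacheAlg B) (x : P.Config × Q.Config) :
    (P.S × Q.S) × ((Fin P.n ⊕ Fin Q.n) → (Fin P.n ⊕ Fin Q.n) → Bool)
      × ((Fin P.n ⊕ Fin Q.n) → Bool) :=
  ((x.1.1, x.2.1), fun i j => decide (pcc P Q x i = pcc P Q x j),
    fun i => (pcc P Q x i).isSome)

lemma congruent_of_pinv_eq (P Q : CacheAlg B) [Infinite B] {x y : P.Config × Q.Config}
    (h : pinv P Q x = pinv P Q y) :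
    ∃ π : B ≃ B, P.renameConfig π x.1 = y.1 ∧ Q.renameConfig π x.2 = y.2 := by
  classical
  set cx := pcc P Q x with hcx
  set cy := pcc P Q y with hcy
  have h1 : x.1.1 = y.1.1 := congrArg (fun z => z.1.1) h
  have h2 : x.2.1 = y.2.1 := congrArg (fun z => z.1.2) h
  have hp : ∀ i j, cx i = cx j ↔ cy i = cy j := by
    intro i j
    have := congrArg (fun z => z.2.1 i j) h
    simp only [pinv] at this
    exact decide_eq_decide.mp this
  have hs : ∀ i, (cx i).isSome = (cy i).isSome := by
    intro i
    exact congrArg (fun z => z.2.2 i) h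
  set sx : Set B := {b | ∃ i, cx i = some b} with hsx
  have hfin : sx.Finite := by
    have hnb : Nonempty B := inferInstance
    have : sx ⊆ Set.range (fun i : Fin P.n ⊕ Fin Q.n => (cx i).getD (Classical.arbitrary B)) := by
      rintro b ⟨i, hi⟩
      exact ⟨i, by simp [hi]⟩
    exact Set.Finite.subset (Set.finite_range _) this
  have key : ∀ {b : B} (hb : ∃ i, cx i = some b), (cy hb.choose).isSome := by
    intro b hb
    rw [← hs]
    rw [hb.choose_spec]
    rfl
  set F : sx → B := fun s => (cy s.2.choose).get (key s.2) with hF0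
  have hF : ∀ (i : Fin P.n ⊕ Fin Q.n) (b : B) (hb : ∃ i, cx i = some b),
      cx i = some b → some (F ⟨b, hb⟩) = cy i := by
    intro i b hb hib
    have h3 : cy hb.choose = cy i := (hp _ _).1 (by rw [hb.choose_spec, hib])
    simp only [hF0, ← h3, Option.some_get]
  have hFinj : Function.Injective F := by
    rintro ⟨b, hb⟩ ⟨b', hb'⟩ hEq
    have e1 := hF hb.choose b hb hb.choose_spec
    have e2 := hF hb'.choose b' hb' hb'.choose_spec
    have e3 : cy hb.choose = cy hb'.choose := by rw [← e1, ← e2, hEq]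
    have e4 : cx hb.choose = cx hb'.choose := (hp _ _).2 e3
    rw [hb.choose_spec, hb'.choose_spec] at e4
    exact Subtype.ext (Option.some_injective B e4)
  have hcard : Cardinal.mk sx < Cardinal.mk B :=
    lt_of_lt_of_le hfin.lt_aleph0 (Cardinal.aleph0_le_mk B)
  obtain ⟨π, hπ⟩ := Cardinal.extend_function_of_lt ⟨F, hFinj⟩ hcard ⟨Equiv.refl B⟩
  have hπ' : ∀ i, (cx i).map π = cy i := by
    intro i
    cases hc : cx i with
    | none =>
      have := hs i
      rw [hc] at this
      cases hcyi : cy i with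
      | none => rfl
      | some a => rw [hcyi] at this; simp at this
    | some b =>
      have hb : ∃ i, cx i = some b := ⟨i, hc⟩
      have : π b = F ⟨b, hb⟩ := hπ ⟨b, hb⟩
      simp only [Option.map_some, this]
      exact hF i b hb hc
  refine ⟨π, ?_, ?_⟩
  · refine Prod.ext h1 ?_
    funext j
    exact hπ' (Sum.inl j)
  · refine Prod.ext h2 ?_
    funext j
    exact hπ' (Sum.inr j)

end Inv
section Pump
set_option linter.unusedSectionVars false
variable {B : Type} [DecidableEq B]

/-- The pumped trace: `u ++ w ++ π(w) ++ π²(w) ++ ⋯ ++ πⁱ(w)`. -/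
def pumpTrace (π : Equiv.Perm B) (u w : List B) : ℕ → List B
  | 0 => u ++ w
  | i + 1 => pumpTrace π u w i ++ w.map (π ^ (i + 1) : Equiv.Perm B)

lemma pumpTrace_length (π : Equiv.Perm B) (u w : List B) :
    ∀ i, (pumpTrace π u w i).length = u.length + (i + 1) * w.length
  | 0 => by simp [pumpTrace]
  | i + 1 => by
    simp [pumpTrace, pumpTrace_length π u w i]
    ring

lemma pump_spec (P : CacheAlg B) (hP : P.EvictBlockIndep) (π : Equiv.Perm B)
    (u w : List B) (g : P.Config) (hg : P.updTrace P.initConfig u = g)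
    (hren : P.updTrace g w = P.renameConfig π g) :
    ∀ i : ℕ, P.updTrace P.initConfig (pumpTrace π u w i)
        = P.renameConfig (π ^ (i + 1) : Equiv.Perm B) g ∧
      P.misses (pumpTrace π u w i) = P.misses u + (i + 1) * P.missesFrom g w
  | 0 => by
    constructor
    · rw [pumpTrace, updTrace_append, hg, hren, pow_one]
    · rw [pumpTrace, CacheAlg.misses, missesFrom_append, hg]
      simp [CacheAlg.misses]
  | i + 1 => by
    obtain ⟨ih1, ih2⟩ := pump_spec P hP π u w g hg hren i
    constructor
    · rw [pumpTrace, updTrace_append, ih1, updTrace_rename P hP, hren,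
        ← renameConfig_mul, ← pow_succ]
    · rw [pumpTrace, CacheAlg.misses, missesFrom_append, ih1,
        missesFrom_rename P hP, ← CacheAlg.misses, ih2]
      ring

lemma discrete_ivt (g : ℕ → ℤ) (h0 : g 0 = 0) (hstep : ∀ l, g (l + 1) ≤ g l + 1)
    (v : ℤ) (hv : 0 ≤ v) : ∀ L : ℕ, v ≤ g L → ∃ l, l ≤ L ∧ g l = v
  | 0, hL => ⟨0, le_rfl, by omega⟩
  | L + 1, hL => by
    by_cases h : v ≤ g L
    · obtain ⟨l, hl, hval⟩ := discrete_ivt g h0 hstep v hv L h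
      exact ⟨l, Nat.le_succ_of_le hl, hval⟩
    · exact ⟨L + 1, le_rfl, by have := hstep L; omega⟩

lemma missesFrom_optList_le (P : CacheAlg B) (o : Option B) (g : P.Config) :
    P.missesFrom g o.toList ≤ 1 := by
  cases o with
  | none => exact Nat.zero_le 1
  | some b => exact missesFrom_single_le P b g

lemma misses_take_le_s16 (P : CacheAlg B) (t : List B) (l : ℕ) :
    P.misses (t.take l) ≤ P.misses (t.take (l + 1)) ∧
      P.misses (t.take (l + 1)) ≤ P.misses (t.take l) + 1 := by
  have hsplit : t.take (l + 1) = t.take l ++ (t[l]?).toList := List.take_succ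
  rw [hsplit, CacheAlg.misses, CacheAlg.misses, missesFrom_append]
  constructor
  · exact Nat.le_add_right _ _
  · exact Nat.add_le_add_left (missesFrom_optList_le P _ _) _

end Pump
section Main
set_option linter.unusedSectionVars false
set_option maxHeartbeats 1000000
variable {B : Type} [DecidableEq B]

lemma main_lemma (P Q : CacheAlg B) [Infinite B] [Finite P.S] [Finite Q.S]
    (hP : P.EvictBlockIndep) (hQ : Q.EvictBlockIndep) (t0 : List B)
    (ht0 : (Nat.card ((P.S × Q.S) × ((Fin P.n ⊕ Fin Q.n) → (Fin P.n ⊕ Fin Q.n) → Bool)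
        × ((Fin P.n ⊕ Fin Q.n) → Bool)) : ℤ) + 1
      ≤ (P.misses t0 : ℤ) - (Q.misses t0 : ℤ)) :
    ∃ f : ℝ, 0 < f ∧ ∃ m0 : ℕ, ∀ m > m0, ∃ t : List B, t.length = m ∧
      f * (t.length : ℝ) < |(P.misses t : ℝ) - (Q.misses t : ℝ)| := by
  classical
  set N : ℕ := Nat.card ((P.S × Q.S) × ((Fin P.n ⊕ Fin Q.n) → (Fin P.n ⊕ Fin Q.n) → Bool)
      × ((Fin P.n ⊕ Fin Q.n) → Bool)) with hN
  have hg0 : (P.misses (t0.take 0) : ℤ) - (Q.misses (t0.take 0) : ℤ) = 0 := by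
    simp [CacheAlg.misses, CacheAlg.missesFrom]
  have hstep : ∀ l, (P.misses (t0.take (l + 1)) : ℤ) - (Q.misses (t0.take (l + 1)) : ℤ)
      ≤ (P.misses (t0.take l) : ℤ) - (Q.misses (t0.take l) : ℤ) + 1 := by
    intro l
    have h1 := misses_take_le_s16 P t0 l
    have h2 := misses_take_le_s16 Q t0 l
    omega
  set gf : ℕ → ℤ := fun l => (P.misses (t0.take l) : ℤ) - (Q.misses (t0.take l) : ℤ) with hgf
  -- first-hitting times for values 0,…,N+1
  have hEx : ∀ v : Fin (N + 2), ∃ l, gf l = (v : ℤ) := by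
    intro v
    have hvN : (v : ℤ) ≤ (N : ℤ) + 1 := by
      have := v.isLt
      omega
    have hlen : (v : ℤ) ≤ gf t0.length := by
      simp only [hgf, List.take_length]
      exact le_trans hvN ht0
    obtain ⟨l, _, hval⟩ := discrete_ivt gf hg0 hstep (v : ℤ) (by positivity) t0.length hlen
    exact ⟨l, hval⟩
  set ℓ : Fin (N + 2) → ℕ := fun v => Nat.find (hEx v) with hℓ
  have hℓval : ∀ v, gf (ℓ v) = (v : ℤ) := fun v => Nat.find_spec (hEx v)
  have hmono : ∀ v w : Fin (N + 2), (v : ℕ) ≤ (w : ℕ) → ℓ v ≤ ℓ w := by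
    intro v w hvw
    have hle : (v : ℤ) ≤ gf (ℓ w) := by
      rw [hℓval w]; exact_mod_cast hvw
    obtain ⟨l, hl, hval⟩ := discrete_ivt gf hg0 hstep (v : ℤ) (by positivity) (ℓ w) hle
    exact le_trans (Nat.find_min' (hEx v) hval) hl
  -- pigeonhole on the invariant
  set CFG : Fin (N + 2) → P.Config × Q.Config := fun v =>
    (P.updTrace P.initConfig (t0.take (ℓ v)), Q.updTrace Q.initConfig (t0.take (ℓ v))) with hCFG
  obtain ⟨v1, v2, hlt, heq⟩ : ∃ v1 v2 : Fin (N + 2), (v1 : ℕ) < (v2 : ℕ) ∧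
      pinv P Q (CFG v1) = pinv P Q (CFG v2) := by
    have : Fintype ((P.S × Q.S) × ((Fin P.n ⊕ Fin Q.n) → (Fin P.n ⊕ Fin Q.n) → Bool)
        × ((Fin P.n ⊕ Fin Q.n) → Bool)) := Fintype.ofFinite _
    have hcard : Fintype.card ((P.S × Q.S) × ((Fin P.n ⊕ Fin Q.n) → (Fin P.n ⊕ Fin Q.n) → Bool)
        × ((Fin P.n ⊕ Fin Q.n) → Bool)) < Fintype.card (Fin (N + 2)) := by
      rw [Fintype.card_fin, ← Nat.card_eq_fintype_card, ← hN]
      omega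
    obtain ⟨a, b, hab, habe⟩ := Fintype.exists_ne_map_eq_of_card_lt
      (fun v : Fin (N + 2) => pinv P Q (CFG v)) hcard
    rcases Nat.lt_or_ge (a : ℕ) (b : ℕ) with h | h
    · exact ⟨a, b, h, habe⟩
    · refine ⟨b, a, ?_, habe.symm⟩
      rcases Nat.lt_or_ge (b : ℕ) (a : ℕ) with h' | h'
      · exact h'
      · exact absurd (Fin.ext (le_antisymm h' h)) hab
  set u : List B := t0.take (ℓ v1) with hu
  set uw : List B := t0.take (ℓ v2) with huw0
  have hl12 : ℓ v1 ≤ ℓ v2 := hmono v1 v2 hlt.le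
  set w : List B := uw.drop (ℓ v1) with hw0
  have huw : u ++ w = uw := by
    have hh : u = uw.take (ℓ v1) := by
      rw [hu, huw0, List.take_take, Nat.min_eq_left hl12]
    rw [hh, hw0]
    exact List.take_append_drop _ _
  set gP : P.Config := P.updTrace P.initConfig u with hgP
  set gQ : Q.Config := Q.updTrace Q.initConfig u with hgQ
  obtain ⟨π, hπP, hπQ⟩ := congruent_of_pinv_eq P Q heq
  have hrenP : P.updTrace gP w = P.renameConfig π gP := by
    have h2 : (CFG v2).1 = P.updTrace gP w := by
      show P.updTrace P.initConfig uw = _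
      rw [← huw, updTrace_append, hgP]
    rw [← h2, ← hπP]
  have hrenQ : Q.updTrace gQ w = Q.renameConfig π gQ := by
    have h2 : (CFG v2).2 = Q.updTrace gQ w := by
      show Q.updTrace Q.initConfig uw = _
      rw [← huw, updTrace_append, hgQ]
    rw [← h2, ← hπQ]
  -- value facts
  have hDu : (P.misses u : ℤ) - (Q.misses u : ℤ) = (v1 : ℤ) := hℓval v1
  have hDuw : (P.misses uw : ℤ) - (Q.misses uw : ℤ) = (v2 : ℤ) := hℓval v2
  have hmP : P.misses uw = P.misses u + P.missesFrom gP w := by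
    rw [← huw, CacheAlg.misses, missesFrom_append, hgP, CacheAlg.misses]
  have hmQ : Q.misses uw = Q.misses u + Q.missesFrom gQ w := by
    rw [← huw, CacheAlg.misses, missesFrom_append, hgQ, CacheAlg.misses]
  have hdPQ : (P.missesFrom gP w : ℤ) - (Q.missesFrom gQ w : ℤ) = (v2 : ℤ) - (v1 : ℤ) := by
    omega
  have hwne : w ≠ [] := by
    intro hcon
    rw [hcon, List.append_nil] at huw
    rw [huw] at hDu
    omega
  have hwpos : 0 < w.length := List.length_pos_iff.2 hwne
  -- pump specifications
  have PS := pump_spec P hP π u w gP hgP.symm hrenP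
  have QS := pump_spec Q hQ π u w gQ hgQ.symm hrenQ
  -- parameters
  set Lu : ℕ := u.length with hLu
  set Lw : ℕ := w.length with hLw
  set L : ℕ := Lu + Lw with hL
  have hLpos : 0 < L := by omega
  refine ⟨1 / (4 * (L : ℝ)), by positivity, Lu + 3 * Lw, ?_⟩
  intro m hm
  set q : ℕ := (m - Lu) / Lw with hq
  set r : ℕ := (m - Lu) % Lw with hr
  have hdm : Lw * q + r = m - Lu := Nat.div_add_mod _ _
  have hrlt : r < Lw := Nat.mod_lt _ hwpos
  have hmge : Lu + 3 * Lw < m := hm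
  have hcomm : q * Lw = Lw * q := Nat.mul_comm _ _
  have hq3 : 3 ≤ q := by
    rw [hq, Nat.le_div_iff_mul_le hwpos]
    omega
  set i : ℕ := q - 1 with hi
  have hiq : i + 1 = q := by omega
  set b0 : B := Classical.arbitrary B with hb0
  have hlen : (pumpTrace π u w i ++ List.replicate r b0).length = m := by
    rw [List.length_append, pumpTrace_length, List.length_replicate, hiq, ← hLu, ← hLw]
    omega
  refine ⟨pumpTrace π u w i ++ List.replicate r b0, hlen, ?_⟩
  set tfin : List B := pumpTrace π u w i ++ List.replicate r b0 with htfin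
  have hPm : P.misses tfin = P.misses u + (i + 1) * P.missesFrom gP w
      + P.missesFrom (P.updTrace P.initConfig (pumpTrace π u w i)) (List.replicate r b0) := by
    rw [htfin, CacheAlg.misses, missesFrom_append, ← CacheAlg.misses, (PS i).2]
  have hQm : Q.misses tfin = Q.misses u + (i + 1) * Q.missesFrom gQ w
      + Q.missesFrom (Q.updTrace Q.initConfig (pumpTrace π u w i)) (List.replicate r b0) := by
    rw [htfin, CacheAlg.misses, missesFrom_append, ← CacheAlg.misses, (QS i).2]
  have hpadP : P.missesFrom (P.updTrace P.initConfig (pumpTrace π u w i))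
      (List.replicate r b0) ≤ 1 := missesFrom_replicate_le P b0 r _
  have hpadQ : Q.missesFrom (Q.updTrace Q.initConfig (pumpTrace π u w i))
      (List.replicate r b0) ≤ 1 := missesFrom_replicate_le Q b0 r _
  -- integer lower bound on the difference
  have hDlow : (q : ℤ) - 1 ≤ (P.misses tfin : ℤ) - (Q.misses tfin : ℤ) := by
    have hv1 : (0 : ℤ) ≤ ((v1 : ℕ) : ℤ) := by positivity
    have he1 : (1 : ℤ) ≤ ((v2 : ℕ) : ℤ) - ((v1 : ℕ) : ℤ) := by
      have := hlt
      omega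
    have hqe : (q : ℤ) ≤ (q : ℤ) * (((v2 : ℕ) : ℤ) - ((v1 : ℕ) : ℤ)) :=
      le_mul_of_one_le_right (by positivity) he1
    have hiq' : ((i : ℤ) + 1) = (q : ℤ) := by exact_mod_cast hiq
    have hPm' : (P.misses tfin : ℤ) = (P.misses u : ℤ)
        + ((i : ℤ) + 1) * (P.missesFrom gP w : ℤ)
        + (P.missesFrom (P.updTrace P.initConfig (pumpTrace π u w i))
            (List.replicate r b0) : ℤ) := by exact_mod_cast hPm
    have hQm' : (Q.misses tfin : ℤ) = (Q.misses u : ℤ)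
        + ((i : ℤ) + 1) * (Q.missesFrom gQ w : ℤ)
        + (Q.missesFrom (Q.updTrace Q.initConfig (pumpTrace π u w i))
            (List.replicate r b0) : ℤ) := by exact_mod_cast hQm
    rw [hPm', hQm', hiq']
    have hexp : (q : ℤ) * (P.missesFrom gP w : ℤ) - (q : ℤ) * (Q.missesFrom gQ w : ℤ)
        = (q : ℤ) * (((v2 : ℕ) : ℤ) - ((v1 : ℕ) : ℤ)) := by
      rw [← mul_sub, hdPQ]
    have hpadP' : (0 : ℤ) ≤ (P.missesFrom (P.updTrace P.initConfig (pumpTrace π u w i))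
        (List.replicate r b0) : ℤ) := by positivity
    have hpadQ' : (Q.missesFrom (Q.updTrace Q.initConfig (pumpTrace π u w i))
        (List.replicate r b0) : ℤ) ≤ 1 := by exact_mod_cast hpadQ
    linarith
  -- the real-number inequality
  have hmub : m + 1 ≤ (q + 1) * L := by
    have h2 : (q + 1) * L = (q + 1) * Lu + (q + 1) * Lw := by rw [hL]; ring
    have h3 : Lu ≤ (q + 1) * Lu := Nat.le_mul_of_pos_left _ (by omega)
    have h4 : Lw * q + Lw ≤ (q + 1) * Lw := by
      have : (q + 1) * Lw = Lw * q + Lw := by ring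
      omega
    omega
  have hq1 : (q : ℝ) + 1 ≤ 4 * ((q : ℝ) - 1) := by
    have : (3 : ℝ) ≤ (q : ℝ) := by exact_mod_cast hq3
    linarith
  have hLR : (0 : ℝ) < (L : ℝ) := by exact_mod_cast hLpos
  have hmR : (m : ℝ) < ((q : ℝ) + 1) * (L : ℝ) := by
    have : (m : ℝ) + 1 ≤ ((q : ℝ) + 1) * (L : ℝ) := by exact_mod_cast hmub
    linarith
  have hfm : 1 / (4 * (L : ℝ)) * (tfin.length : ℝ) < (q : ℝ) - 1 := by
    rw [hlen, div_mul_eq_mul_div, one_mul, div_lt_iff₀ (by positivity)]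
    calc (m : ℝ) < ((q : ℝ) + 1) * (L : ℝ) := hmR
      _ ≤ 4 * ((q : ℝ) - 1) * (L : ℝ) := by nlinarith
      _ = ((q : ℝ) - 1) * (4 * (L : ℝ)) := by ring
  refine lt_of_lt_of_le hfm ?_
  have hDR : (q : ℝ) - 1 ≤ (P.misses tfin : ℝ) - (Q.misses tfin : ℝ) := by
    exact_mod_cast hDlow
  exact le_trans hDR (le_abs_self _)

end Main
theorem unbounded_diff_linear_growth (P Q : CacheAlg B) [Infinite B]
    [Finite P.S] [Finite Q.S]
    (hP : P.EvictBlockIndep) (hQ : Q.EvictBlockIndep)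
    (hub : ∀ m : ℕ, ∃ t : List B, (m : ℤ) < |(P.misses t : ℤ) - (Q.misses t : ℤ)|) :
    ∃ f : ℝ, 0 < f ∧ ∃ m0 : ℕ, ∀ m > m0, ∃ t : List B, t.length = m ∧
      f * (t.length : ℝ) < |(P.misses t : ℝ) - (Q.misses t : ℝ)| := by
  classical
  set n1 : ℕ := Nat.card ((P.S × Q.S) × ((Fin P.n ⊕ Fin Q.n) → (Fin P.n ⊕ Fin Q.n) → Bool)
      × ((Fin P.n ⊕ Fin Q.n) → Bool)) with hn1
  set n2 : ℕ := Nat.card ((Q.S × P.S) × ((Fin Q.n ⊕ Fin P.n) → (Fin Q.n ⊕ Fin P.n) → Bool)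
      × ((Fin Q.n ⊕ Fin P.n) → Bool)) with hn2
  obtain ⟨t, ht⟩ := hub (max n1 n2)
  rcases le_or_gt 0 ((P.misses t : ℤ) - (Q.misses t : ℤ)) with h | h
  · rw [abs_of_nonneg h] at ht
    have hcast : ((max n1 n2 : ℕ) : ℤ) = max (n1 : ℤ) (n2 : ℤ) := by push_cast; rfl
    have h1 : (n1 : ℤ) + 1 ≤ (P.misses t : ℤ) - (Q.misses t : ℤ) := by
      have := le_max_left (n1 : ℤ) (n2 : ℤ)
      omega
    exact main_lemma P Q hP hQ t h1
  · rw [abs_of_neg h] at ht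
    have hcast : ((max n1 n2 : ℕ) : ℤ) = max (n1 : ℤ) (n2 : ℤ) := by push_cast; rfl
    have h2 : (n2 : ℤ) + 1 ≤ (Q.misses t : ℤ) - (P.misses t : ℤ) := by
      have := le_max_right (n1 : ℤ) (n2 : ℤ)
      omega
    obtain ⟨f, hf, m0, hm⟩ := main_lemma Q P hQ hP t h2
    refine ⟨f, hf, m0, ?_⟩
    intro m hm'
    obtain ⟨tt, htl, hbound⟩ := hm m hm'
    exact ⟨tt, htl, by rwa [abs_sub_comm]⟩
end
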